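/- For the ODE system ∂ₜu₀ = 0, ∂ₜu₁ = −2u₁, ∂ₜu₂ = −6u₂ + 2u₀, if the initial data satisfies the second-order realizability conditions u₀ ≥ |u₁| and u₀u₂ ≥ u₁², then the exact solution satisfies these conditions for all t ≥ 0, and as t → ∞ the solution converges to the isotropic state (u₀(0), 0, u₀(0)/3). -/

import Mathlib

open Filter

/-- for the ODE system `u₀' = 0`, `u₁' = -2u₁`, `u₂' = -6u₂ + 2u₀`, if
the initial data satisfies the second-order realizability conditions `u₀ ≥ |u₁|` and
`u₀u₂ ≥ u₁²`, then the solution satisfies these for all `t ≥ 0` and converges as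
`t → ∞` to the isotropic state `(u₀(0), 0, u₀(0)/3)`. -/
theorem laplace_beltrami_moment_ode_realizability
    (u₀ u₁ u₂ : ℝ → ℝ)
    (h₀ : ∀ t, HasDerivAt u₀ 0 t)
    (h₁ : ∀ t, HasDerivAt u₁ (-2 * u₁ t) t)
    (h₂ : ∀ t, HasDerivAt u₂ (-6 * u₂ t + 2 * u₀ t) t)
    (hinit₁ : |u₁ 0| ≤ u₀ 0)
    (hinit₂ : u₁ 0 ^ 2 ≤ u₀ 0 * u₂ 0) :
    (∀ t : ℝ, 0 ≤ t → |u₁ t| ≤ u₀ t ∧ u₁ t ^ 2 ≤ u₀ t * u₂ t) ∧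
    Tendsto (fun t => (u₀ t, u₁ t, u₂ t)) atTop (nhds (u₀ 0, 0, u₀ 0 / 3)) := by
  -- u₀ is constant
  have hu0 : ∀ t, u₀ t = u₀ 0 :=
    fun t => is_const_of_deriv_eq_zero (fun s => (h₀ s).differentiableAt)
      (fun s => (h₀ s).deriv) t 0
  -- explicit formula for u₁
  have key1 : ∀ t, Real.exp (2*t) * u₁ t = u₁ 0 := by
    intro t
    have hf : ∀ s : ℝ, HasDerivAt (fun s => Real.exp (2*s) * u₁ s) 0 s := by
      intro s
      have he : HasDerivAt (fun s : ℝ => Real.exp (2*s)) (Real.exp (2*s) * 2) s := by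
        simpa using ((hasDerivAt_id s).const_mul 2).exp
      have := he.mul (h₁ s)
      refine this.congr_deriv ?_
      ring
    have := is_const_of_deriv_eq_zero (fun s => (hf s).differentiableAt)
      (fun s => (hf s).deriv) t 0
    simpa using this
  have hu1 : ∀ t, u₁ t = Real.exp (-(2*t)) * u₁ 0 := by
    intro t
    rw [← key1 t, ← mul_assoc, ← Real.exp_add]
    simp
  -- explicit formula for u₂
  set c : ℝ := u₀ 0 / 3 with hc
  have key2 : ∀ t, Real.exp (6*t) * (u₂ t - c) = u₂ 0 - c := by
    intro t
    have hf : ∀ s : ℝ, HasDerivAt (fun s => Real.exp (6*s) * (u₂ s - c)) 0 s := by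
      intro s
      have he : HasDerivAt (fun s : ℝ => Real.exp (6*s)) (Real.exp (6*s) * 6) s := by
        simpa using ((hasDerivAt_id s).const_mul 6).exp
      have hg : HasDerivAt (fun s => u₂ s - c) (-6 * u₂ s + 2 * u₀ s) s :=
        (h₂ s).sub_const c
      have := he.mul hg
      refine this.congr_deriv ?_
      rw [hu0 s, hc]
      ring
    have := is_const_of_deriv_eq_zero (fun s => (hf s).differentiableAt)
      (fun s => (hf s).deriv) t 0
    simpa using this
  have hu2 : ∀ t, u₂ t = Real.exp (-(6*t)) * (u₂ 0 - c) + c := by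
    intro t
    rw [← key2 t, ← mul_assoc, ← Real.exp_add]
    simp
  have hu00 : 0 ≤ u₀ 0 := le_trans (abs_nonneg _) hinit₁
  constructor
  · intro t ht
    have hs : Real.exp (-(2*t)) ≤ 1 := Real.exp_le_one_iff.2 (by linarith)
    have hsp : 0 < Real.exp (-(2*t)) := Real.exp_pos _
    constructor
    · rw [hu1 t, hu0 t, abs_mul, abs_of_pos hsp]
      calc Real.exp (-(2*t)) * |u₁ 0| ≤ 1 * |u₁ 0| := by
            exact mul_le_mul_of_nonneg_right hs (abs_nonneg _)
        _ ≤ u₀ 0 := by linarith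
    · rw [hu1 t, hu0 t, hu2 t]
      set s := Real.exp (-(2*t)) with hsdef
      have h6 : Real.exp (-(6*t)) = s^3 := by
        rw [hsdef, ← Real.exp_nat_mul]
        norm_num
        ring_nf
      rw [h6, hc]
      have hsq : u₁ 0 ^ 2 ≤ u₀ 0 ^ 2 := by
        nlinarith [sq_abs (u₁ 0), mul_self_le_mul_self (abs_nonneg (u₁ 0)) hinit₁]
      have hpoly : 3*s^2 - 2*s^3 ≤ 1 := by nlinarith [sq_nonneg (1-s), hsp.le]
      have hA : 0 ≤ s^3 * (u₀ 0 * u₂ 0 - u₁ 0 ^ 2) :=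
        mul_nonneg (pow_nonneg hsp.le 3) (by linarith)
      have hB : 0 ≤ (s^2 - s^3) * (u₀ 0 ^ 2 - u₁ 0 ^ 2) := by
        have h1 : 0 ≤ s^2 * (1 - s) := mul_nonneg (sq_nonneg s) (by linarith)
        exact mul_nonneg (by nlinarith) (by linarith)
      have hC : 0 ≤ (1 - 3*s^2 + 2*s^3) * (u₀ 0 ^ 2) :=
        mul_nonneg (by linarith) (sq_nonneg _)
      nlinarith [hA, hB, hC]
  · have ht0 : Tendsto u₀ atTop (nhds (u₀ 0)) :=
      Tendsto.congr (fun t => (hu0 t).symm) tendsto_const_nhds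
    have hexp : ∀ a : ℝ, 0 < a → Tendsto (fun t : ℝ => Real.exp (-(a*t))) atTop (nhds 0) := by
      intro a ha
      have h2 : Tendsto (fun t : ℝ => a * t) atTop atTop :=
        Tendsto.const_mul_atTop ha tendsto_id
      have h1 : Tendsto (fun t : ℝ => -(a * t)) atTop atBot :=
        tendsto_neg_atBot_iff.2 h2
      exact Real.tendsto_exp_atBot.comp h1
    have ht1 : Tendsto u₁ atTop (nhds 0) := by
      refine Tendsto.congr (fun t => (hu1 t).symm) ?_
      simpa using (hexp 2 (by norm_num)).mul_const (u₁ 0)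
    have ht2 : Tendsto u₂ atTop (nhds (u₀ 0 / 3)) := by
      refine Tendsto.congr (fun t => (hu2 t).symm) ?_
      have := ((hexp 6 (by norm_num)).mul_const (u₂ 0 - c)).add_const c
      simpa [hc] using this
    rw [nhds_prod_eq, nhds_prod_eq]
    exact ht0.prodMk (ht1.prodMk ht2)
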